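/- For the greedy matrix A(n), the function g, where g(i) is the column index of the first one in row i, is monotonically increasing: g(i+1) ≥ g(i) for all i ≥ 1. -/
import Mathlib


/-- Number of ones in row `k` strictly to the left of column `l` (columns `1..l-1`). -/
def rowOnes (a : ℕ → ℕ → Bool) (k l : ℕ) : ℕ :=
  ((Finset.Ico 1 l).filter (fun j => a k j = true)).card

/-- Number of ones in column `l` strictly above row `k` (rows `1..k-1`). -/
def colOnes (a : ℕ → ℕ → Bool) (k l : ℕ) : ℕ :=
  ((Finset.Ico 1 k).filter (fun i => a i l = true)).card

/-- The greedy (first-choice) matrix `A(n)`: entries are placed row by row, left to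
right; a one is placed at `(k,l)` unless the row already has `n+1` ones to the left,
the column already has `n+1` ones above, or a rectangle of ones would be created. -/
def IsGreedy (n : ℕ) (a : ℕ → ℕ → Bool) : Prop :=
  (∀ i j, i = 0 ∨ j = 0 → a i j = false) ∧
  ∀ k l, 1 ≤ k → 1 ≤ l →
    (a k l = true ↔
      rowOnes a k l < n + 1 ∧ colOnes a k l < n + 1 ∧
      ¬ ∃ i j, 1 ≤ i ∧ i < k ∧ 1 ≤ j ∧ j < l ∧
        a i j = true ∧ a i l = true ∧ a k j = true)

/-- Lemma 3.2: for the greedy matrix `A(n)`, the column index `g i` of the first one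
in row `i` is monotonically increasing: `g i ≤ g (i+1)`. -/
theorem stmt3 (n : ℕ) (a : ℕ → ℕ → Bool) (h : IsGreedy n a) (i : ℕ) (hi : 1 ≤ i)
    (gi gi1 : ℕ)
    (hgi : 1 ≤ gi ∧ a i gi = true ∧ ∀ j, 1 ≤ j → a i j = true → gi ≤ j)
    (hgi1 : 1 ≤ gi1 ∧ a (i + 1) gi1 = true ∧ ∀ j, 1 ≤ j → a (i + 1) j = true → gi1 ≤ j) :
    gi ≤ gi1 := by
  by_contra hlt
  push_neg at hlt
  obtain ⟨hg1, hag, hmin⟩ := hgi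
  obtain ⟨hg1', hag', hmin'⟩ := hgi1
  obtain ⟨h0, hG⟩ := h
  have hfalse : a i gi1 = false := by
    cases hEq : a i gi1 with
    | false => rfl
    | true => exact absurd (hmin gi1 hg1' hEq) (by omega)
  have hiff := hG i gi1 hi hg1'
  rw [hfalse] at hiff
  simp only [Bool.false_eq_true, false_iff] at hiff
  push_neg at hiff
  have hrow : rowOnes a i gi1 = 0 := by
    unfold rowOnes
    rw [Finset.card_eq_zero, Finset.filter_eq_empty_iff]
    intro j hj haj
    rw [Finset.mem_Ico] at hj
    have := hmin j hj.1 haj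
    omega
  have hnorect : ¬ ∃ i' j, 1 ≤ i' ∧ i' < i ∧ 1 ≤ j ∧ j < gi1 ∧
      a i' j = true ∧ a i' gi1 = true ∧ a i j = true := by
    rintro ⟨i', j, _, _, hj1, hj2, _, _, haij⟩
    have := hmin j hj1 haij
    omega
  have hcol : n + 1 ≤ colOnes a i gi1 := by
    rcases Nat.lt_or_ge (colOnes a i gi1) (n+1) with hc | hc
    · exact absurd (hiff (by omega) hc) (by simpa using hnorect)
    · exact hc
  have hcol2 := ((hG (i+1) gi1 (by omega) hg1').mp hag').2.1
  have hsub : colOnes a i gi1 ≤ colOnes a (i+1) gi1 :=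
    Finset.card_le_card (Finset.filter_subset_filter _ (Finset.Ico_subset_Ico_right (by omega)))
  omega
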